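/- Let M be an n × n 0-1 matrix avoiding every matrix in T_{r,s}, and let M' be obtained from M by deleting the first s+1 and last s+1 ones in every row and the last r ones in every column. Construct the bar s-visibility representation H from M' (one bar per nonempty row of M', spanning from its first to its last one) with a vertical edge-segment from each one of M' having at least s+1 ones of M' below it in its column, extending to the (s+1)-st bar below. Then every edge of H has multiplicity less than r (i.e., no (s+2)-set of bars is realized as an edge by r distinct columns). -/

import Mathlib

/-- `A` contains the 0-1 pattern `P`. -/
def Contains {a b m n : ℕ} (P : Matrix (Fin a) (Fin b) Bool)
    (A : Matrix (Fin m) (Fin n) Bool) : Prop :=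
  ∃ (ri : Fin a → Fin m) (ci : Fin b → Fin n),
    StrictMono ri ∧ StrictMono ci ∧
      ∀ i j, P i j = true → A (ri i) (ci j) = true

/-- Membership in the collection `T_{r,s}`. -/
def memT (r s : ℕ) (M : Matrix (Fin (r + s + 2)) (Fin (r + 2 * s + 2)) Bool) : Prop :=
  ∃ (f g : Fin (s + 1) ≃ Fin (s + 1)) (h : Fin r ≃ Fin r),
    ∀ i j, M i j = true ↔
      ((i.val = 0 ∧ ∃ a : Fin r, j.val = s + 1 + a.val) ∨
        (∃ a : Fin (s + 1), i.val = 1 + a.val ∧ j.val = (f a).val) ∨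
        (∃ a : Fin (s + 1), i.val = 1 + a.val ∧ j.val = r + s + 1 + (g a).val) ∨
        (∃ a : Fin r, i.val = s + 2 + a.val ∧ j.val = s + 1 + (h a).val))

/-- `M'`: the matrix obtained from `M` by deleting the first `s+1` and last `s+1` ones
in every row and the last `r` ones in every column.  A one of `M` survives iff it is
preceded by at least `s+1` ones in its row, followed by at least `s+1` ones in its row,
and followed by at least `r` ones (weakly) below... precisely: it is not among the first
`s+1` or last `s+1` ones of its row nor among the last `r` ones of its column. -/
def pruned (r s : ℕ) {n : ℕ} (M : Matrix (Fin n) (Fin n) Bool) :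
    Matrix (Fin n) (Fin n) Bool :=
  fun i j =>
    M i j &&
      decide (s + 1 < (Finset.univ.filter fun j' : Fin n => j' ≤ j ∧ M i j' = true).card) &&
      decide (s + 1 < (Finset.univ.filter fun j' : Fin n => j ≤ j' ∧ M i j' = true).card) &&
      decide (r < (Finset.univ.filter fun i' : Fin n => i ≤ i' ∧ M i' j = true).card)

/-- The bar of row `i` of `M'` (spanning from its first one to its last one) crosses
column `c`. -/
def Spans {n : ℕ} (M' : Matrix (Fin n) (Fin n) Bool) (i c : Fin n) : Prop :=
  (∃ j1, j1 ≤ c ∧ M' i j1 = true) ∧ (∃ j2, c ≤ j2 ∧ M' i j2 = true)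

/-- Column `c` realizes the `(s+2)`-set of bars `E` as an edge of the bar `s`-visibility
representation built from `M'`: there is a one of `M'` at `(i, c)` with at least `s+1`
ones of `M'` below it in column `c`, and `E` consists of `i` together with the bars
crossing column `c` strictly below `i` up to the `(s+1)`-st such bar `i'`. -/
def Realizes (s : ℕ) {n : ℕ} (M' : Matrix (Fin n) (Fin n) Bool) (c : Fin n)
    (E : Finset (Fin n)) : Prop :=
  E.card = s + 2 ∧
    ∃ i ∈ E, M' i c = true ∧
      s + 1 ≤ (Finset.univ.filter fun i'' : Fin n => i < i'' ∧ M' i'' c = true).card ∧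
      ∃ i' ∈ E, (∀ a ∈ E, i ≤ a ∧ a ≤ i') ∧
        ∀ a : Fin n, a ∈ E ↔ (a = i ∨ (i < a ∧ a ≤ i' ∧ Spans M' a c))

lemma card_aux {α : Type*} [DecidableEq α] {k : ℕ} {S T : Finset α} {x : α} (hx : x ∈ S)
    (hST : ∀ y ∈ S, y ≠ x → y ∈ T) (h : k < S.card) : k ≤ T.card := by
  have h1 : S.erase x ⊆ T := fun y hy =>
    hST y (Finset.mem_of_mem_erase hy) (Finset.ne_of_mem_erase hy)
  have h2 := Finset.card_erase_of_mem hx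
  have h3 := Finset.card_le_card h1
  omega

lemma hall_aux {α : Type*} [DecidableEq α] [Fintype α] {k : ℕ} (A : Fin k → Finset α)
    (hA : ∀ t, k ≤ (A t).card) :
    ∃ φ : Fin k → α, Function.Injective φ ∧ ∀ t, φ t ∈ A t := by
  rw [← Finset.all_card_le_biUnion_card_iff_exists_injective]
  intro S
  rcases S.eq_empty_or_nonempty with h | ⟨t, ht⟩
  · simp [h]
  · calc S.card ≤ Fintype.card (Fin k) := Finset.card_le_univ S
      _ = k := Fintype.card_fin k
      _ ≤ (A t).card := hA t
      _ ≤ (S.biUnion A).card := Finset.card_le_card (Finset.subset_biUnion_of_mem A ht)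

lemma pruned_spec {r s n : ℕ} {M : Matrix (Fin n) (Fin n) Bool} {i j : Fin n} :
    pruned r s M i j = true ↔
      M i j = true ∧
      s + 1 < (Finset.univ.filter fun j' : Fin n => j' ≤ j ∧ M i j' = true).card ∧
      s + 1 < (Finset.univ.filter fun j' : Fin n => j ≤ j' ∧ M i j' = true).card ∧
      r < (Finset.univ.filter fun i' : Fin n => i ≤ i' ∧ M i' j = true).card := by
  simp [pruned, Bool.and_eq_true, and_assoc]

lemma sort_aux {α : Type*} [LinearOrder α] {k : ℕ} (φ : Fin k → α) (h : Function.Injective φ) :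
    ∃ (L : Fin k → α) (f : Fin k ≃ Fin k), StrictMono L ∧ ∀ a, L (f a) = φ a := by
  refine ⟨φ ∘ Tuple.sort φ, (Tuple.sort φ).symm,
    (Tuple.monotone_sort φ).strictMono_of_injective (h.comp (Tuple.sort φ).injective),
    fun a => by simp⟩

lemma glue3 {α : Type*} [LinearOrder α] {k1 k2 k3 K : ℕ} (hK : K = k1 + k2 + k3)
    (A : Fin k1 → α) (B : Fin k2 → α) (C : Fin k3 → α)
    (hA : StrictMono A) (hB : StrictMono B) (hC : StrictMono C)
    (hAB : ∀ t u, A t < B u) (hAC : ∀ t u, A t < C u) (hBC : ∀ t u, B t < C u) :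
    ∃ ci : Fin K → α, StrictMono ci ∧
      (∀ (j : Fin K) (t : Fin k1), j.val = t.val → ci j = A t) ∧
      (∀ (j : Fin K) (t : Fin k2), j.val = k1 + t.val → ci j = B t) ∧
      (∀ (j : Fin K) (t : Fin k3), j.val = k1 + k2 + t.val → ci j = C t) := by
  refine ⟨fun j =>
    if h : j.val < k1 then A ⟨j.val, h⟩
    else if h2 : j.val < k1 + k2 then B ⟨j.val - k1, by omega⟩
    else C ⟨j.val - (k1 + k2), by have := j.isLt; omega⟩, ?_, ?_, ?_, ?_⟩
  · intro x y hxy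
    dsimp only
    rw [Fin.lt_def] at hxy
    by_cases hx : x.val < k1 <;> by_cases hy : y.val < k1
    · rw [dif_pos hx, dif_pos hy]; exact hA (by rw [Fin.lt_def]; exact hxy)
    · rw [dif_pos hx, dif_neg hy]
      by_cases hy2 : y.val < k1 + k2
      · rw [dif_pos hy2]; exact hAB _ _
      · rw [dif_neg hy2]; exact hAC _ _
    · omega
    · rw [dif_neg hx, dif_neg hy]
      by_cases hx2 : x.val < k1 + k2 <;> by_cases hy2 : y.val < k1 + k2
      · rw [dif_pos hx2, dif_pos hy2]; exact hB (by rw [Fin.lt_def]; simp only []; omega)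
      · rw [dif_pos hx2, dif_neg hy2]; exact hBC _ _
      · omega
      · rw [dif_neg hx2, dif_neg hy2]; exact hC (by rw [Fin.lt_def]; simp only []; omega)
  · intro j t hjt
    dsimp only
    rw [dif_pos (by omega : j.val < k1)]
    congr 1; exact Fin.ext hjt
  · intro j t hjt
    dsimp only
    have := t.isLt
    rw [dif_neg (by omega : ¬ j.val < k1), dif_pos (by omega : j.val < k1 + k2)]
    congr 1; exact Fin.ext (by simp only []; omega)
  · intro j t hjt
    dsimp only
    have := t.isLt
    rw [dif_neg (by omega : ¬ j.val < k1), dif_neg (by omega : ¬ j.val < k1 + k2)]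
    congr 1; exact Fin.ext (by simp only []; omega)

set_option maxHeartbeats 1000000 in
/-- If `M` (an `n × n` 0-1 matrix) avoids every matrix in `T_{r,s}`, then in the bar
`s`-visibility representation built from `M'` every edge has multiplicity less than `r`:
no `(s+2)`-set of bars that is realized as an edge is realized by `r` distinct columns. -/
theorem stmt_14 (r s n : ℕ) (M : Matrix (Fin n) (Fin n) Bool)
    (hA : ∀ P : Matrix (Fin (r + s + 2)) (Fin (r + 2 * s + 2)) Bool,
      memT r s P → ¬ Contains P M) :
    ∀ E : Finset (Fin n), (∃ c, Realizes s (pruned r s M) c E) →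
      {c : Fin n | Realizes s (pruned r s M) c E}.ncard < r := by
  classical
  intro E hEx
  obtain ⟨cex, hcex⟩ := hEx
  by_contra hcon
  push_neg at hcon
  set M' := pruned r s M with hM'def
  set T : Set (Fin n) := {c : Fin n | Realizes s M' c E} with hTdef
  have hTfin : T.Finite := Set.toFinite _
  have hT1 : 0 < T.ncard := (Set.ncard_pos hTfin).mpr ⟨cex, hcex⟩
  have hm1le : max r 1 ≤ hTfin.toFinset.card := by
    rw [← Set.ncard_eq_toFinset_card T hTfin]
    omega
  obtain ⟨C, hCsub, hCcard⟩ := Finset.exists_subset_card_eq hm1le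
  have hCreal : ∀ c ∈ C, Realizes s M' c E := by
    intro c hc
    have := hCsub hc
    rw [Set.Finite.mem_toFinset] at this
    exact this
  have hm1pos : 0 < max r 1 := by omega
  have hrle : r ≤ max r 1 := le_max_left r 1
  set cm : Fin (max r 1) → Fin n := fun t => C.orderEmbOfFin hCcard t with hcmdef
  have hcmmono : StrictMono cm := (C.orderEmbOfFin hCcard).strictMono
  have hcmreal : ∀ t, Realizes s M' (cm t) E := fun t =>
    hCreal _ (C.orderEmbOfFin_mem hCcard t)
  set t0 : Fin (max r 1) := ⟨0, hm1pos⟩ with ht0def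
  set tlast : Fin (max r 1) := ⟨max r 1 - 1, by omega⟩ with htlastdef
  set c0 : Fin n := cm t0 with hc0def
  set cmax : Fin n := cm tlast with hcmaxdef
  have hc0le : ∀ t, c0 ≤ cm t := fun t =>
    hcmmono.monotone (by simp [ht0def, Fin.le_def])
  have hcmle : ∀ t, cm t ≤ cmax := fun t =>
    hcmmono.monotone (by simp [htlastdef, Fin.le_def]; omega)
  -- extract i0, i1
  obtain ⟨hEcard, i0, hi0E, hi0M0, hcnt0, i1, hi1E, hbd0, hiff0⟩ := hcmreal t0
  have hcol : ∀ c, Realizes s M' c E →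
      M' i0 c = true ∧
      s + 1 ≤ (Finset.univ.filter fun i'' : Fin n => i0 < i'' ∧ M' i'' c = true).card ∧
      (∀ a : Fin n, a ∈ E ↔ (a = i0 ∨ (i0 < a ∧ a ≤ i1 ∧ Spans M' a c))) := by
    rintro c ⟨-, i, hiE, hiM, hcnt, i', hi'E, hbd, hiff⟩
    have hii : i = i0 := le_antisymm ((hbd i0 hi0E).1) ((hbd0 i hiE).1)
    have hii' : i' = i1 := le_antisymm ((hbd0 i' hi'E).2) ((hbd i1 hi1E).2)
    subst hii; subst hii'
    exact ⟨hiM, hcnt, hiff⟩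
  have hi0i1 : i0 < i1 := by
    have h2 : 1 < E.card := by omega
    obtain ⟨x, hxE, hxne⟩ := Finset.exists_mem_ne h2 i0
    have := (hbd0 x hxE)
    have hlt : i0 < x := lt_of_le_of_ne this.1 (Ne.symm hxne)
    exact lt_of_lt_of_le hlt this.2
  -- per-column bottom fact
  have hbot : ∀ c, Realizes s M' c E →
      r ≤ (Finset.univ.filter fun i'' : Fin n => i1 < i'' ∧ M i'' c = true).card := by
    intro c hc
    obtain ⟨hM'i0, hcnt, hiff⟩ := hcol c hc
    have hβ : ∃ β, i1 ≤ β ∧ M' β c = true := by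
      by_contra hno
      push_neg at hno
      have hsub : (Finset.univ.filter fun i'' : Fin n => i0 < i'' ∧ M' i'' c = true)
          ⊆ (E.erase i0).erase i1 := by
        intro a ha
        rw [Finset.mem_filter] at ha
        obtain ⟨-, hlt, hMa⟩ := ha
        have halt : a < i1 := by
          by_contra hge
          exact (hno a (le_of_not_gt hge)) hMa
        have haE : a ∈ E := (hiff a).mpr (Or.inr ⟨hlt, le_of_lt halt,
          ⟨⟨c, le_refl c, hMa⟩, ⟨c, le_refl c, hMa⟩⟩⟩)
        exact Finset.mem_erase.mpr ⟨ne_of_lt halt,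
          Finset.mem_erase.mpr ⟨ne_of_gt hlt, haE⟩⟩
      have hc1 : ((E.erase i0).erase i1).card = s := by
        rw [Finset.card_erase_of_mem (Finset.mem_erase.mpr ⟨ne_of_gt hi0i1, hi1E⟩),
          Finset.card_erase_of_mem hi0E, hEcard]
        omega
      have := Finset.card_le_card hsub
      omega
    obtain ⟨β, hβi1, hβM⟩ := hβ
    have hpr := pruned_spec.mp hβM
    refine card_aux (x := β) ?_ ?_ hpr.2.2.2
    · rw [Finset.mem_filter]
      exact ⟨Finset.mem_univ β, le_refl β, hpr.1⟩
    · intro y hy hyne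
      rw [Finset.mem_filter] at hy ⊢
      refine ⟨Finset.mem_univ y, lt_of_le_of_lt hβi1 (lt_of_le_of_ne hy.2.1 (Ne.symm hyne)), hy.2.2⟩
  -- bars
  set e : Fin (s + 2) → Fin n := fun t => E.orderEmbOfFin hEcard t with hedef
  have hemono : StrictMono e := (E.orderEmbOfFin hEcard).strictMono
  have hemem : ∀ t, e t ∈ E := fun t => E.orderEmbOfFin_mem hEcard t
  have hesurj : ∀ x ∈ E, ∃ t, e t = x := by
    intro x hx
    have : x ∈ Set.range (E.orderEmbOfFin hEcard) := by
      rw [Finset.range_orderEmbOfFin]; exact hx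
    exact this
  have he0 : e 0 = i0 := by
    obtain ⟨t', ht'⟩ := hesurj i0 hi0E
    exact le_antisymm (ht' ▸ hemono.monotone (Fin.zero_le t')) ((hbd0 _ (hemem 0)).1)
  have helast : e ⟨s + 1, by omega⟩ = i1 := by
    obtain ⟨t', ht'⟩ := hesurj i1 hi1E
    refine le_antisymm ((hbd0 _ (hemem _)).2) ?_
    rw [← ht']
    exact hemono.monotone (by rw [Fin.le_def]; simp; omega)
  clear_value e
  obtain ⟨b, hbval⟩ : ∃ b : Fin (s + 1) → Fin n,
      ∀ t : Fin (s + 1), b t = e ⟨t.val + 1, by omega⟩ := ⟨_, fun t => rfl⟩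
  have hbE : ∀ t, b t ∈ E := fun t => by rw [hbval t]; exact hemem _
  have hbgt : ∀ t, i0 < b t := by
    intro t
    rw [hbval t, ← he0]
    exact hemono (by rw [Fin.lt_def]; simp)
  have hspan : ∀ (t : Fin (s + 1)) (c : Fin n), Realizes s M' c E → Spans M' (b t) c := by
    intro t c hc
    have := ((hcol c hc).2.2 (b t)).mp (hbE t)
    rcases this with h | h
    · exact absurd h (ne_of_gt (hbgt t))
    · exact h.2.2
  -- left / right candidate counts
  have hleft : ∀ t : Fin (s + 1),
      s + 1 ≤ (Finset.univ.filter fun j : Fin n => j < c0 ∧ M (b t) j = true).card := by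
    intro t
    obtain ⟨⟨j1, hj1c, hj1M⟩, -⟩ := hspan t c0 (hcmreal t0)
    have hpr := pruned_spec.mp hj1M
    refine card_aux (x := j1) ?_ ?_ hpr.2.1
    · rw [Finset.mem_filter]; exact ⟨Finset.mem_univ _, le_refl _, hpr.1⟩
    · intro y hy hyne
      rw [Finset.mem_filter] at hy ⊢
      exact ⟨Finset.mem_univ _, lt_of_lt_of_le (lt_of_le_of_ne hy.2.1 hyne) hj1c, hy.2.2⟩
  have hright : ∀ t : Fin (s + 1),
      s + 1 ≤ (Finset.univ.filter fun j : Fin n => cmax < j ∧ M (b t) j = true).card := by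
    intro t
    obtain ⟨-, ⟨j2, hj2c, hj2M⟩⟩ := hspan t cmax (hcmreal tlast)
    have hpr := pruned_spec.mp hj2M
    refine card_aux (x := j2) ?_ ?_ hpr.2.2.1
    · rw [Finset.mem_filter]; exact ⟨Finset.mem_univ _, le_refl _, hpr.1⟩
    · intro y hy hyne
      rw [Finset.mem_filter] at hy ⊢
      exact ⟨Finset.mem_univ _, lt_of_le_of_lt hj2c (lt_of_le_of_ne hy.2.1 (Ne.symm hyne)), hy.2.2⟩
  -- Hall choices
  obtain ⟨φL, hφLinj, hφLmem⟩ := hall_aux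
    (fun t : Fin (s + 1) => Finset.univ.filter fun j : Fin n => j < c0 ∧ M (b t) j = true) hleft
  obtain ⟨φR, hφRinj, hφRmem⟩ := hall_aux
    (fun t : Fin (s + 1) => Finset.univ.filter fun j : Fin n => cmax < j ∧ M (b t) j = true) hright
  obtain ⟨χ, hχinj, hχmem⟩ := hall_aux
    (fun k : Fin r => Finset.univ.filter fun i'' : Fin n =>
      i1 < i'' ∧ M i'' (cm (Fin.castLE hrle k)) = true)
    (fun k => hbot _ (hcmreal _))
  simp only [Finset.mem_filter] at hφLmem hφRmem hχmem
  -- sorted versions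
  obtain ⟨Lf, f, hLfmono, hLfeq⟩ := sort_aux φL hφLinj
  obtain ⟨Rf, g, hRfmono, hRfeq⟩ := sort_aux φR hφRinj
  obtain ⟨ρf, dD, hρfmono, hρfeq⟩ := sort_aux χ hχinj
  have hLfval : ∀ t, Lf t = φL (f.symm t) := fun t => by
    have := hLfeq (f.symm t); simpa using this
  have hRfval : ∀ t, Rf t = φR (g.symm t) := fun t => by
    have := hRfeq (g.symm t); simpa using this
  have hρfval : ∀ t, ρf t = χ (dD.symm t) := fun t => by
    have := hρfeq (dD.symm t); simpa using this
  have hLflt : ∀ t, Lf t < c0 := fun t => by rw [hLfval t]; exact (hφLmem _).2.1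
  have hRfgt : ∀ t, cmax < Rf t := fun t => by rw [hRfval t]; exact (hφRmem _).2.1
  have hρfgt : ∀ t, i1 < ρf t := fun t => by rw [hρfval t]; exact (hχmem _).2.1
  have hc0cmax : c0 ≤ cmax := hcmle t0
  have hMofM' : ∀ (x y : Fin n), M' x y = true → M x y = true := fun x y h =>
    (pruned_spec.mp h).1
  have haux1 : ∀ a : Fin (s + 1), 1 + a.val < s + 2 := fun a => by omega
  have haux3 : ∀ x y : ℕ, x = r + s + 1 + y → x = s + 1 + r + y := fun x y h => by omega
  -- row and column embeddings via glue3
  have heli1 : ∀ t : Fin (s + 2), e t ≤ i1 := by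
    intro t
    rw [← helast]
    exact hemono.monotone (by rw [Fin.le_def]; exact Nat.lt_succ_iff.mp t.isLt)
  obtain ⟨ri, hrimono, hriA, hriB, -⟩ :=
    glue3 (by omega : r + s + 2 = (s + 2) + r + 0) e ρf Fin.elim0
      hemono hρfmono (fun x => x.elim0)
      (fun t u => lt_of_le_of_lt (heli1 t) (hρfgt u))
      (fun t u => u.elim0) (fun t u => u.elim0)
  obtain ⟨ci, hcimono, hciA, hciB, hciC⟩ :=
    glue3 (by omega : r + 2 * s + 2 = (s + 1) + r + (s + 1))
      Lf (fun k : Fin r => cm (Fin.castLE hrle k)) Rf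
      hLfmono (hcmmono.comp (Fin.strictMono_castLE hrle)) hRfmono
      (fun t u => lt_of_lt_of_le (hLflt t) (hc0le _))
      (fun t u => lt_of_lt_of_le (hLflt t) (le_of_lt (lt_of_le_of_lt hc0cmax (hRfgt u))))
      (fun t u => lt_of_le_of_lt (hcmle _) (hRfgt u))
  -- the pattern
  set P : Matrix (Fin (r + s + 2)) (Fin (r + 2 * s + 2)) Bool := fun i j =>
    decide ((i.val = 0 ∧ ∃ a : Fin r, j.val = s + 1 + a.val) ∨
      (∃ a : Fin (s + 1), i.val = 1 + a.val ∧ j.val = (f a).val) ∨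
      (∃ a : Fin (s + 1), i.val = 1 + a.val ∧ j.val = r + s + 1 + (g a).val) ∨
      (∃ a : Fin r, i.val = s + 2 + a.val ∧ j.val = s + 1 + (dD.symm a).val)) with hPdef
  have hmemT : memT r s P := by
    refine ⟨f, g, dD.symm, fun i j => ?_⟩
    simp only [hPdef, decide_eq_true_eq]
  refine hA P hmemT ⟨ri, ci, hrimono, hcimono, ?_⟩
  intro i j hP
  simp only [hPdef, decide_eq_true_eq] at hP
  rcases hP with ⟨hi, a, hj⟩ | ⟨a, hi, hj⟩ | ⟨a, hi, hj⟩ | ⟨a, hi, hj⟩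
  · -- row 0, middle columns
    rw [hriA i ⟨0, Nat.succ_pos _⟩ hi, hciB j a hj]
    have h0 : e (⟨0, Nat.succ_pos _⟩ : Fin (s + 2)) = i0 := by
      rw [← he0]; congr 1
    rw [h0]
    exact hMofM' _ _ (hcol _ (hcmreal _)).1
  · -- left block
    rw [hriA i ⟨1 + a.val, haux1 a⟩ hi, hciA j (f a) hj]
    have hb : e ⟨1 + a.val, haux1 a⟩ = b a := by
      rw [hbval a]; congr 1; exact Fin.ext (Nat.add_comm 1 a.val)
    rw [hb, hLfeq a]
    exact (hφLmem a).2.2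
  · -- right block
    rw [hriA i ⟨1 + a.val, haux1 a⟩ hi, hciC j (g a) (haux3 j.val (g a).val hj)]
    have hb : e ⟨1 + a.val, haux1 a⟩ = b a := by
      rw [hbval a]; congr 1; exact Fin.ext (Nat.add_comm 1 a.val)
    rw [hb, hRfeq a]
    exact (hφRmem a).2.2
  · -- bottom block
    rw [hriB i a hi, hciB j (dD.symm a) hj, hρfval a]
    exact (hχmem (dD.symm a)).2.2
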